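/- Let N ≥ 2, d ≥ 1, let μ = (μ_{t,i})_{t∈{1,…,N}, i∈{1,…,d}} be probability measures on ℝ with finite first moments, and let π ∈ VMT(μ). For t ∈ {1,…,N−1} let χ_{t+1} : ℝ^d → ℝ be convex functions with χ_{t+1}(X_t) and χ_{t+1}(X_{t+1}) π-integrable, let ξ_t : ℝ^d → ℝ^d be measurable functions with ξ_t(x) ∈ ∂χ_{t+1}(x) for every x, and let h_t : ℝ^{td} → ℝ^d be bounded measurable functions. Assume ξ_t(X_t)·(X_{t+1} − X_t) is π-integrable for each t. Then E_π[ Σ_{t=1}^{N−1} ( χ_{t+1}(X_t) − χ_{t+1}(X_{t+1}) + h_t(X_1,…,X_t)·(X_{t+1} − X_t) ) ] = E_π[ Σ_{t=1}^{N−1} ( χ_{t+1}(X_t) − χ_{t+1}(X_{t+1}) + ξ_t(X_t)·(X_{t+1} − X_t) ) ] ≤ 0. -/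

import Mathlib

open MeasureTheory Filter

noncomputable section

/-- Euclidean dot product on ℝ^d. -/
def dotp {d : ℕ} (u v : Fin d → ℝ) : ℝ := ∑ i, u i * v i

/-- Vectorial martingale transports. -/
def VMT (N d : ℕ) (μ : Fin N → Fin d → Measure ℝ) :
    Set (Measure (Fin N → Fin d → ℝ)) :=
  {π | IsProbabilityMeasure π ∧
    (∀ t i, π.map (fun x => x t i) = μ t i) ∧
    ∀ (t : ℕ) (ht : t + 1 < N),
      π[(fun x => x ⟨t + 1, ht⟩) |
        MeasurableSpace.comap
          (fun (x : Fin N → Fin d → ℝ) (s : Fin (t + 1)) =>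
            x ⟨s.val, by have := s.isLt; omega⟩) inferInstance]
        =ᵐ[π] fun x => x ⟨t, by omega⟩}

section Aux

variable {Ω : Type*} {m m0 : MeasurableSpace Ω} {π : Measure Ω}

lemma aux_bdd_zero (hm : m ≤ m0) [IsProbabilityMeasure π]
    {f g : Ω → ℝ} (hfm : StronglyMeasurable[m] f) {C : ℝ} (hfb : ∀ x, ‖f x‖ ≤ C)
    (hg : Integrable g π) (hcond : π[g|m] =ᵐ[π] 0) :
    ∫ x, f x * g x ∂π = 0 := by
  have hfg : Integrable (fun x => f x * g x) π :=
    hg.bdd_mul ((hfm.mono hm).aestronglyMeasurable) (Filter.Eventually.of_forall hfb)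
  have h1 : π[(fun x => f x * g x)|m] =ᵐ[π] 0 := by
    refine (condExp_mul_of_stronglyMeasurable_left hfm hfg hg).trans ?_
    filter_upwards [hcond] with x hx
    simp only [Pi.mul_apply, hx, Pi.zero_apply, mul_zero]
  calc ∫ x, f x * g x ∂π = ∫ x, (π[(fun y => f y * g y)|m]) x ∂π :=
        (integral_condExp hm).symm
    _ = ∫ _x, (0:ℝ) ∂π := integral_congr_ae h1
    _ = 0 := by simp

lemma aux_dot_zero (hm : m ≤ m0) [IsProbabilityMeasure π] {d : ℕ}
    {F D : Ω → Fin d → ℝ}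
    (hFm : ∀ i, StronglyMeasurable[m] fun x => F x i)
    (hD : ∀ i, Integrable (fun x => D x i) π)
    (hcond : ∀ i, π[(fun x => D x i)|m] =ᵐ[π] 0)
    (hint : Integrable (fun x => ∑ i, F x i * D x i) π) :
    ∫ x, ∑ i, F x i * D x i ∂π = 0 := by
  set G : Ω → ℝ := fun x => ∑ i, F x i * D x i with hG
  set s : ℕ → Set Ω := fun n => {x | ∀ i, |F x i| ≤ n} with hs
  have hsm : ∀ n, MeasurableSet[m] (s n) := by
    intro n
    have : s n = ⋂ i, {x | |F x i| ≤ (n:ℝ)} := by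
      ext x; simp [hs, Set.mem_iInter]
    rw [this]
    refine MeasurableSet.iInter fun i => ?_
    have : {x | |F x i| ≤ (n:ℝ)} = (fun x => |F x i|) ⁻¹' Set.Iic (n:ℝ) := rfl
    rw [this]
    exact (measurable_abs.comp ((hFm i).measurable)) measurableSet_Iic
  have hzero : ∀ n, ∫ x, (s n).indicator G x ∂π = 0 := by
    intro n
    have heq : ∀ x, (s n).indicator G x
        = ∑ i, ((s n).indicator (fun y => F y i) x) * D x i := by
      intro x
      by_cases hx : x ∈ s n
      · simp [Set.indicator_of_mem hx, hG]
      · simp [Set.indicator_of_notMem hx]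
    have hbdd : ∀ i, ∀ x, ‖(s n).indicator (fun y => F y i) x‖ ≤ (n:ℝ) := by
      intro i x
      by_cases hx : x ∈ s n
      · simpa [Set.indicator_of_mem hx, Real.norm_eq_abs] using hx i
      · simp [Set.indicator_of_notMem hx]
    have hmeas : ∀ i, StronglyMeasurable[m] ((s n).indicator (fun y => F y i)) :=
      fun i => (hFm i).indicator (hsm n)
    have hintt : ∀ i, Integrable (fun x => ((s n).indicator (fun y => F y i) x) * D x i) π :=
      fun i => (hD i).bdd_mul (((hmeas i).mono hm).aestronglyMeasurable) (Filter.Eventually.of_forall (hbdd i))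
    rw [integral_congr_ae (Filter.Eventually.of_forall heq),
      integral_finset_sum _ (fun i _ => hintt i)]
    refine Finset.sum_eq_zero fun i _ => ?_
    exact aux_bdd_zero hm (hmeas i) (hbdd i) (hD i) (hcond i)
  have hpt : ∀ x, Tendsto (fun n => (s n).indicator G x) atTop (nhds (G x)) := by
    intro x
    refine tendsto_const_nhds.congr' ?_
    filter_upwards [eventually_ge_atTop ⌈∑ j, |F x j|⌉₊] with n hn
    have hxmem : x ∈ s n := by
      intro i
      have h1 : |F x i| ≤ ∑ j, |F x j| :=
        Finset.single_le_sum (f := fun j => |F x j|) (fun j _ => abs_nonneg _)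
          (Finset.mem_univ i)
      have h2 : (∑ j, |F x j|) ≤ (n:ℝ) := by
        calc (∑ j, |F x j|) ≤ (⌈∑ j, |F x j|⌉₊ : ℝ) := Nat.le_ceil _
          _ ≤ (n:ℝ) := by exact_mod_cast hn
      linarith
    simp [Set.indicator_of_mem hxmem]
  have htend : Tendsto (fun n => ∫ x, (s n).indicator G x ∂π) atTop (nhds (∫ x, G x ∂π)) := by
    refine tendsto_integral_of_dominated_convergence (fun x => |G x|)
      (fun n => hint.aestronglyMeasurable.indicator (hm _ (hsm n)))
      hint.abs (fun n => Filter.Eventually.of_forall fun x => ?_)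
      (Filter.Eventually.of_forall hpt)
    · by_cases hx : x ∈ s n
      · simp [Set.indicator_of_mem hx, Real.norm_eq_abs]
      · simp [Set.indicator_of_notMem hx, abs_nonneg]
  have h0 : Tendsto (fun n => ∫ x, (s n).indicator G x ∂π) atTop (nhds 0) := by
    simp only [hzero]; exact tendsto_const_nhds
  exact tendsto_nhds_unique htend h0

end Aux

/-- Projection onto the first `t+1` coordinates. -/
def pmap (N d t : ℕ) (ht : t + 1 ≤ N) :
    (Fin N → Fin d → ℝ) → (Fin (t + 1) → Fin d → ℝ) :=
  fun x s => x ⟨s.val, by have := s.isLt; omega⟩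

/-- The σ-algebra generated by the first `t+1` coordinates. -/
def mSp (N d t : ℕ) (ht : t + 1 ≤ N) : MeasurableSpace (Fin N → Fin d → ℝ) :=
  MeasurableSpace.comap (pmap N d t ht) inferInstance

/-- Under a vectorial martingale transport, the dynamic trading terms h_t can be
replaced by subgradients ξ_t of the convex functions χ_{t+1} without changing the
expectation, and the resulting expectation is nonpositive. -/
theorem trading_term_substitution (N d : ℕ) (hN : 2 ≤ N) (hd : 1 ≤ d)
    (μ : Fin N → Fin d → Measure ℝ)
    (hprob : ∀ t i, IsProbabilityMeasure (μ t i))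
    (hmom : ∀ t i, Integrable id (μ t i))
    (π : Measure (Fin N → Fin d → ℝ)) (hπ : π ∈ VMT N d μ)
    (χ : ℕ → (Fin d → ℝ) → ℝ)
    (hχconv : ∀ (u : ℕ), u + 1 < N → ConvexOn ℝ Set.univ (χ (u + 2)))
    (hχint : ∀ (u : ℕ) (hu : u + 1 < N),
      Integrable (fun x => χ (u + 2) (x ⟨u, by omega⟩)) π ∧
      Integrable (fun x => χ (u + 2) (x ⟨u + 1, hu⟩)) π)
    (ξ : ℕ → (Fin d → ℝ) → (Fin d → ℝ))
    (hξm : ∀ (u : ℕ), u + 1 < N → Measurable (ξ (u + 1)))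
    (hξsub : ∀ (u : ℕ), u + 1 < N → ∀ x y : Fin d → ℝ,
      χ (u + 2) x + dotp (ξ (u + 1) x) (y - x) ≤ χ (u + 2) y)
    (hξint : ∀ (u : ℕ) (hu : u + 1 < N),
      Integrable (fun x => dotp (ξ (u + 1) (x ⟨u, by omega⟩))
        (x ⟨u + 1, hu⟩ - x ⟨u, by omega⟩)) π)
    (h : (s : ℕ) → (Fin s → Fin d → ℝ) → (Fin d → ℝ))
    (hhm : ∀ (u : ℕ), u + 1 < N → Measurable (h (u + 1)))
    (hhb : ∀ (u : ℕ), u + 1 < N → ∃ B : ℝ, ∀ p, ‖h (u + 1) p‖ ≤ B) :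
    (∫ x, (∑ u : Fin (N - 1),
        (χ (u.val + 2) (x ⟨u.val, by have := u.isLt; omega⟩) -
          χ (u.val + 2) (x ⟨u.val + 1, by have := u.isLt; omega⟩) +
          dotp (h (u.val + 1)
              (fun j : Fin (u.val + 1) => x ⟨j.val, by have := j.isLt; have := u.isLt; omega⟩))
            (x ⟨u.val + 1, by have := u.isLt; omega⟩ - x ⟨u.val, by have := u.isLt; omega⟩))) ∂π)
      = (∫ x, (∑ u : Fin (N - 1),
        (χ (u.val + 2) (x ⟨u.val, by have := u.isLt; omega⟩) -
          χ (u.val + 2) (x ⟨u.val + 1, by have := u.isLt; omega⟩) +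
          dotp (ξ (u.val + 1) (x ⟨u.val, by have := u.isLt; omega⟩))
            (x ⟨u.val + 1, by have := u.isLt; omega⟩ - x ⟨u.val, by have := u.isLt; omega⟩))) ∂π) ∧
    (∫ x, (∑ u : Fin (N - 1),
        (χ (u.val + 2) (x ⟨u.val, by have := u.isLt; omega⟩) -
          χ (u.val + 2) (x ⟨u.val + 1, by have := u.isLt; omega⟩) +
          dotp (ξ (u.val + 1) (x ⟨u.val, by have := u.isLt; omega⟩))
            (x ⟨u.val + 1, by have := u.isLt; omega⟩ - x ⟨u.val, by have := u.isLt; omega⟩))) ∂π)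
      ≤ 0 := by
  classical
  obtain ⟨hprobπ, hlaw, hmart⟩ := hπ
  haveI := hprobπ
  -- integrability of coordinates
  have hXint : ∀ (t : Fin N) (i : Fin d),
      Integrable (fun x : Fin N → Fin d → ℝ => x t i) π := by
    intro t i
    have h1 : Integrable id (π.map (fun x : Fin N → Fin d → ℝ => x t i)) := by
      rw [hlaw t i]; exact hmom t i
    have h2 := h1.comp_aemeasurable
      (((measurable_pi_apply i).comp (measurable_pi_apply t)).aemeasurable)
    simpa [Function.comp] using h2
  -- integrability of vector coordinates
  have hXvint : ∀ (t : Fin N),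
      Integrable (fun x : Fin N → Fin d → ℝ => x t) π := by
    intro t
    refine Integrable.mono' (g := fun x => ∑ i, |x t i|)
      (integrable_finset_sum _ (fun i _ => (hXint t i).abs))
      (measurable_pi_apply t).aestronglyMeasurable
      (Filter.Eventually.of_forall fun x => ?_)
    rw [pi_norm_le_iff_of_nonneg (Finset.sum_nonneg fun i _ => abs_nonneg _)]
    intro i
    calc ‖x t i‖ = |x t i| := Real.norm_eq_abs _
      _ ≤ ∑ j, |x t j| :=
        Finset.single_le_sum (f := fun j => |x t j|) (fun j _ => abs_nonneg _)
          (Finset.mem_univ i)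
  -- key vanishing lemma
  have key : ∀ (t : ℕ) (ht : t + 1 < N)
      (F : (Fin N → Fin d → ℝ) → Fin d → ℝ),
      (∀ i, StronglyMeasurable[mSp N d t ht.le] (fun x => F x i)) →
      Integrable (fun x : Fin N → Fin d → ℝ =>
        ∑ i, F x i * (x ⟨t + 1, ht⟩ i - x ⟨t, by omega⟩ i)) π →
      ∫ x, ∑ i, F x i * (x ⟨t + 1, ht⟩ i - x ⟨t, by omega⟩ i) ∂π = 0 := by
    intro t ht F hFm hFint
    have hpmeas : Measurable (pmap N d t ht.le) :=
      measurable_pi_lambda _ fun s => measurable_pi_apply _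
    have hm : mSp N d t ht.le ≤ MeasurableSpace.pi :=
      measurable_iff_comap_le.mp hpmeas
    have hpm : Measurable[mSp N d t ht.le] (pmap N d t ht.le) :=
      measurable_iff_comap_le.mpr le_rfl
    have hXm : Measurable[mSp N d t ht.le] (fun x : Fin N → Fin d → ℝ => x ⟨t, by omega⟩) :=
      (measurable_pi_apply (⟨t, by omega⟩ : Fin (t + 1))).comp hpm
    have hDcond : ∀ i, π[(fun x : Fin N → Fin d → ℝ =>
        x ⟨t + 1, ht⟩ i - x ⟨t, by omega⟩ i)|mSp N d t ht.le] =ᵐ[π] 0 := by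
      intro i
      have hXtim : StronglyMeasurable[mSp N d t ht.le]
          (fun x : Fin N → Fin d → ℝ => x ⟨t, by omega⟩ i) :=
        ((measurable_pi_apply i).comp hXm).stronglyMeasurable
      have hmartc := hmart t ht
      have h1 : (fun x : Fin N → Fin d → ℝ => x ⟨t, by omega⟩ i)
          =ᵐ[π] π[(fun x : Fin N → Fin d → ℝ => x ⟨t + 1, ht⟩ i)|mSp N d t ht.le] := by
        refine ae_eq_condExp_of_forall_setIntegral_eq hm (hXint ⟨t + 1, ht⟩ i)
          (fun s _ _ => (hXint ⟨t, by omega⟩ i).integrableOn) ?_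
          hXtim.aestronglyMeasurable
        intro s hsmt _
        have hvec : (∫ x in s, x ⟨t + 1, ht⟩ ∂π)
            = ∫ x in s, x ⟨t, by omega⟩ ∂π := by
          calc (∫ x in s, x ⟨t + 1, ht⟩ ∂π)
              = ∫ x in s, (π[(fun x : Fin N → Fin d → ℝ =>
                  x ⟨t + 1, ht⟩)|mSp N d t ht.le]) x ∂π :=
                (setIntegral_condExp hm (hXvint ⟨t + 1, ht⟩) hsmt).symm
            _ = ∫ x in s, x ⟨t, by omega⟩ ∂π :=
                integral_congr_ae (ae_restrict_of_ae hmartc)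
        have hL := (ContinuousLinearMap.proj (R := ℝ) (φ := fun _ : Fin d => ℝ)
            i).integral_comp_comm ((hXvint ⟨t + 1, ht⟩).restrict (s := s))
        have hL' := (ContinuousLinearMap.proj (R := ℝ) (φ := fun _ : Fin d => ℝ)
            i).integral_comp_comm ((hXvint ⟨t, by omega⟩).restrict (s := s))
        simp only [ContinuousLinearMap.proj_apply] at hL hL'
        rw [hL', hL, hvec]
      have h2 := condExp_of_stronglyMeasurable hm hXtim (hXint ⟨t, by omega⟩ i)
      refine (condExp_sub (m := mSp N d t ht.le) (hXint ⟨t + 1, ht⟩ i)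
        (hXint ⟨t, by omega⟩ i)).trans ?_
      filter_upwards [h1] with x hx
      have h2x : (π[(fun y : Fin N → Fin d → ℝ => y ⟨t, by omega⟩ i)|mSp N d t ht.le]) x
          = x ⟨t, by omega⟩ i := by rw [h2]
      simp only [Pi.sub_apply, Pi.zero_apply, h2x, ← hx, sub_self]
    exact aux_dot_zero hm (F := F)
      (D := fun x i => x ⟨t + 1, ht⟩ i - x ⟨t, by omega⟩ i)
      hFm (fun i => (hXint ⟨t + 1, ht⟩ i).sub (hXint ⟨t, by omega⟩ i)) hDcond hFint
  -- integrability of the χ differences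
  have hA : ∀ u : Fin (N - 1), Integrable (fun x : Fin N → Fin d → ℝ =>
      χ (u.val + 2) (x ⟨u.val, by have := u.isLt; omega⟩) -
        χ (u.val + 2) (x ⟨u.val + 1, by have := u.isLt; omega⟩)) π := by
    intro u
    have hu : u.val + 1 < N := by have := u.isLt; omega
    exact ((hχint u.val hu).1).sub ((hχint u.val hu).2)
  -- integrability and vanishing of the h terms (in Σ form)
  have hBhS : ∀ (u : Fin (N - 1)) (hu : u.val + 1 < N),
      Integrable (fun x : Fin N → Fin d → ℝ =>
        ∑ i, h (u.val + 1) (pmap N d u.val hu.le x) i *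
          (x ⟨u.val + 1, hu⟩ i - x ⟨u.val, by omega⟩ i)) π := by
    intro u hu
    obtain ⟨B, hB⟩ := hhb u.val hu
    refine integrable_finset_sum _ fun i _ => ?_
    refine ((hXint ⟨u.val + 1, hu⟩ i).sub (hXint ⟨u.val, by omega⟩ i)).bdd_mul
      ?_ (Filter.Eventually.of_forall fun x => le_trans (norm_le_pi_norm _ i) (hB _))
    exact ((measurable_pi_apply i).comp ((hhm u.val hu).comp
      (measurable_pi_lambda _ fun s => measurable_pi_apply _))).aestronglyMeasurable
  have hBxS : ∀ (u : Fin (N - 1)) (hu : u.val + 1 < N),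
      Integrable (fun x : Fin N → Fin d → ℝ =>
        ∑ i, ξ (u.val + 1) (x ⟨u.val, by omega⟩) i *
          (x ⟨u.val + 1, hu⟩ i - x ⟨u.val, by omega⟩ i)) π := by
    intro u hu
    exact hξint u.val hu
  have hBh0 : ∀ (u : Fin (N - 1)) (hu : u.val + 1 < N),
      ∫ x, ∑ i, h (u.val + 1) (pmap N d u.val hu.le x) i *
        (x ⟨u.val + 1, hu⟩ i - x ⟨u.val, by omega⟩ i) ∂π = 0 := by
    intro u hu
    have hpm : Measurable[mSp N d u.val hu.le] (pmap N d u.val hu.le) :=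
      measurable_iff_comap_le.mpr le_rfl
    exact key u.val hu (fun x i => h (u.val + 1) (pmap N d u.val hu.le x) i)
      (fun i => (((measurable_pi_apply i).comp (hhm u.val hu)).comp hpm).stronglyMeasurable)
      (hBhS u hu)
  have hBξ0 : ∀ (u : Fin (N - 1)) (hu : u.val + 1 < N),
      ∫ x, ∑ i, ξ (u.val + 1) (x ⟨u.val, by omega⟩) i *
        (x ⟨u.val + 1, hu⟩ i - x ⟨u.val, by omega⟩ i) ∂π = 0 := by
    intro u hu
    have hpm : Measurable[mSp N d u.val hu.le] (pmap N d u.val hu.le) :=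
      measurable_iff_comap_le.mpr le_rfl
    have hXm : Measurable[mSp N d u.val hu.le]
        (fun x : Fin N → Fin d → ℝ => x ⟨u.val, by omega⟩) :=
      (measurable_pi_apply (⟨u.val, by omega⟩ : Fin (u.val + 1))).comp hpm
    exact key u.val hu (fun x i => ξ (u.val + 1) (x ⟨u.val, by omega⟩) i)
      (fun i => (((measurable_pi_apply i).comp (hξm u.val hu)).comp hXm).stronglyMeasurable)
      (hBxS u hu)
  -- main combinator
  have main : ∀ (B : Fin (N - 1) → (Fin N → Fin d → ℝ) → ℝ),
      (∀ u, Integrable (B u) π) → (∀ u, ∫ x, B u x ∂π = 0) →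
      (∫ x, ∑ u : Fin (N - 1),
        ((χ (u.val + 2) (x ⟨u.val, by have := u.isLt; omega⟩) -
          χ (u.val + 2) (x ⟨u.val + 1, by have := u.isLt; omega⟩)) + B u x) ∂π)
        = ∑ u : Fin (N - 1), ∫ x,
            (χ (u.val + 2) (x ⟨u.val, by have := u.isLt; omega⟩) -
              χ (u.val + 2) (x ⟨u.val + 1, by have := u.isLt; omega⟩)) ∂π := by
    intro B hBint hB0
    have e1 := integral_finset_sum (μ := π) Finset.univ
      (f := fun (u : Fin (N - 1)) (x : Fin N → Fin d → ℝ) =>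
        (χ (u.val + 2) (x ⟨u.val, by have := u.isLt; omega⟩) -
          χ (u.val + 2) (x ⟨u.val + 1, by have := u.isLt; omega⟩)) + B u x)
      (fun u _ => (hA u).add (hBint u))
    refine e1.trans ?_
    refine Finset.sum_congr rfl fun u _ => ?_
    exact (integral_add (hA u) (hBint u)).trans (by rw [hB0 u, add_zero])
  have hufact : ∀ u : Fin (N - 1), u.val + 1 < N := fun u => by have := u.isLt; omega
  constructor
  · exact (main
        (fun u x => ∑ i, h (u.val + 1) (pmap N d u.val (hufact u).le x) i *
          (x ⟨u.val + 1, hufact u⟩ i - x ⟨u.val, by omega⟩ i))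
        (fun u => hBhS u (hufact u)) (fun u => hBh0 u (hufact u))).trans
      (main
        (fun u x => ∑ i, ξ (u.val + 1) (x ⟨u.val, by omega⟩) i *
          (x ⟨u.val + 1, hufact u⟩ i - x ⟨u.val, by omega⟩ i))
        (fun u => hBxS u (hufact u)) (fun u => hBξ0 u (hufact u))).symm
  · refine integral_nonpos fun x => ?_
    refine Finset.sum_nonpos fun u _ => ?_
    have hu : u.val + 1 < N := hufact u
    have hsub := hξsub u.val hu (x ⟨u.val, by omega⟩) (x ⟨u.val + 1, hu⟩)
    linarith [hsub]
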